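/- Fix real g > 2 and a positive integer n ≤ g, and for θ ∈ {π/4, 3π/4} define CR_θ on compositions m = (m_1,…,m_r) of n by CR_θ(m) = (−1)^r 2^r 2^{n/2} Π_{s=1}^{r} [(g−1)cos(m_s θ) + cos(m_s π/2)]/(m_1+⋯+m_s). Then CR_{π/4}(m) > 0 if and only if the number of parts m_s with m_s ≡ 1, 7, or 0 (mod 8) is even, and CR_{π/4}(m) < 0 if and only if that number is odd. -/

import Mathlib

open Real

lemma cos_vals :
    Real.cos ((0:ℝ) * (π/4)) = 1 ∧ Real.cos ((0:ℝ) * (π/2)) = 1 ∧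
    Real.cos ((1:ℝ) * (π/4)) = Real.sqrt 2 / 2 ∧ Real.cos ((1:ℝ) * (π/2)) = 0 ∧
    Real.cos ((2:ℝ) * (π/4)) = 0 ∧ Real.cos ((2:ℝ) * (π/2)) = -1 ∧
    Real.cos ((3:ℝ) * (π/4)) = -(Real.sqrt 2 / 2) ∧ Real.cos ((3:ℝ) * (π/2)) = 0 ∧
    Real.cos ((4:ℝ) * (π/4)) = -1 ∧ Real.cos ((4:ℝ) * (π/2)) = 1 ∧
    Real.cos ((5:ℝ) * (π/4)) = -(Real.sqrt 2 / 2) ∧ Real.cos ((5:ℝ) * (π/2)) = 0 ∧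
    Real.cos ((6:ℝ) * (π/4)) = 0 ∧ Real.cos ((6:ℝ) * (π/2)) = -1 ∧
    Real.cos ((7:ℝ) * (π/4)) = Real.sqrt 2 / 2 ∧ Real.cos ((7:ℝ) * (π/2)) = 0 := by
  refine ⟨by norm_num, by norm_num, by norm_num [Real.cos_pi_div_four],
    by norm_num [Real.cos_pi_div_two], ?_, ?_, ?_, ?_, ?_, ?_, ?_, ?_, ?_, ?_, ?_, ?_⟩
  · rw [show (2:ℝ)*(π/4) = π/2 by ring, Real.cos_pi_div_two]
  · rw [show (2:ℝ)*(π/2) = π by ring, Real.cos_pi]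
  · rw [show (3:ℝ)*(π/4) = π - π/4 by ring, Real.cos_pi_sub, Real.cos_pi_div_four]
  · rw [show (3:ℝ)*(π/2) = 2*π - π/2 by ring, Real.cos_two_pi_sub, Real.cos_pi_div_two]
  · rw [show (4:ℝ)*(π/4) = π by ring, Real.cos_pi]
  · rw [show (4:ℝ)*(π/2) = 2*π - 0 by ring, Real.cos_two_pi_sub, Real.cos_zero]
  · rw [show (5:ℝ)*(π/4) = 2*π - (π - π/4) by ring, Real.cos_two_pi_sub, Real.cos_pi_sub,
      Real.cos_pi_div_four]
  · rw [show (5:ℝ)*(π/2) = π/2 + (1:ℕ)*(2*π) by push_cast; ring,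
      Real.cos_add_nat_mul_two_pi, Real.cos_pi_div_two]
  · rw [show (6:ℝ)*(π/4) = 2*π - π/2 by ring, Real.cos_two_pi_sub, Real.cos_pi_div_two]
  · rw [show (6:ℝ)*(π/2) = π + (1:ℕ)*(2*π) by push_cast; ring,
      Real.cos_add_nat_mul_two_pi, Real.cos_pi]
  · rw [show (7:ℝ)*(π/4) = 2*π - π/4 by ring, Real.cos_two_pi_sub, Real.cos_pi_div_four]
  · rw [show (7:ℝ)*(π/2) = (2*π - π/2) + (1:ℕ)*(2*π) by push_cast; ring,
      Real.cos_add_nat_mul_two_pi, Real.cos_two_pi_sub, Real.cos_pi_div_two]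

lemma factor_sign (g : ℝ) (hg : 2 < g) (m : ℕ) :
    (((m % 8 = 1 ∨ m % 8 = 7 ∨ m % 8 = 0)) →
      0 < (g - 1) * Real.cos ((m : ℝ) * (π / 4)) + Real.cos ((m : ℝ) * (π / 2))) ∧
    ((¬(m % 8 = 1 ∨ m % 8 = 7 ∨ m % 8 = 0)) →
      (g - 1) * Real.cos ((m : ℝ) * (π / 4)) + Real.cos ((m : ℝ) * (π / 2)) < 0) := by
  obtain ⟨q, t, ht, rfl⟩ : ∃ q t, t < 8 ∧ m = 8 * q + t :=
    ⟨m / 8, m % 8, Nat.mod_lt _ (by norm_num), (Nat.div_add_mod m 8).symm⟩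
  have h4 : ((8 * q + t : ℕ) : ℝ) * (π / 4) = (t : ℝ) * (π / 4) + (q:ℕ) * (2 * π) := by
    push_cast; ring
  have h2 : ((8 * q + t : ℕ) : ℝ) * (π / 2) = (t : ℝ) * (π / 2) + ((2 * q : ℕ):ℝ) * (2 * π) := by
    push_cast; ring
  rw [h4, h2, Real.cos_add_nat_mul_two_pi, Real.cos_add_nat_mul_two_pi]
  have hs : (0:ℝ) < Real.sqrt 2 / 2 := by positivity
  obtain ⟨e0, e0', e1, e1', e2, e2', e3, e3', e4, e4', e5, e5', e6, e6', e7, e7'⟩ := cos_vals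
  interval_cases t
  · exact ⟨fun _ => by push_cast; rw [e0, e0']; linarith, fun h => absurd (by omega) h⟩
  · exact ⟨fun _ => by push_cast; rw [e1, e1']; nlinarith, fun h => absurd (by omega) h⟩
  · refine ⟨fun h => absurd h (by omega), fun _ => by push_cast; rw [e2, e2']; linarith⟩
  · refine ⟨fun h => absurd h (by omega), fun _ => by push_cast; rw [e3, e3']; nlinarith⟩
  · refine ⟨fun h => absurd h (by omega), fun _ => by push_cast; rw [e4, e4']; linarith⟩
  · refine ⟨fun h => absurd h (by omega), fun _ => by push_cast; rw [e5, e5']; nlinarith⟩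
  · refine ⟨fun h => absurd h (by omega), fun _ => by push_cast; rw [e6, e6']; linarith⟩
  · exact ⟨fun _ => by push_cast; rw [e7, e7']; nlinarith, fun h => absurd (by omega) h⟩

/-- `CR_θ(m)` for a composition `m = (m_1,…,m_r)` of `n`:
`(-1)^r 2^r 2^{n/2} ∏_s [(g-1)cos(m_s θ) + cos(m_s π/2)]/(m_1+⋯+m_s)`. -/
noncomputable def CR (g θ : ℝ) {n : ℕ} (c : Composition n) : ℝ :=
  (-1 : ℝ) ^ c.length * 2 ^ c.length * Real.sqrt 2 ^ n *
    ∏ s : Fin c.length,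
      ((g - 1) * Real.cos ((c.blocksFun s : ℝ) * θ)
        + Real.cos ((c.blocksFun s : ℝ) * (π / 2))) / (c.sizeUpTo (s + 1) : ℝ)

/-- Sign characterization of `CR_{π/4}` via the parity of the number of parts congruent
to `1`, `7` or `0` modulo `8`. -/
theorem CR_pi_div_four_sign (g : ℝ) (hg : 2 < g) (n : ℕ) (hn : 0 < n) (hng : (n : ℝ) ≤ g)
    (c : Composition n) :
    (0 < CR g (π / 4) c ↔ Even ((Finset.univ.filter (fun s : Fin c.length =>
        c.blocksFun s % 8 = 1 ∨ c.blocksFun s % 8 = 7 ∨ c.blocksFun s % 8 = 0)).card))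
    ∧ (CR g (π / 4) c < 0 ↔ Odd ((Finset.univ.filter (fun s : Fin c.length =>
        c.blocksFun s % 8 = 1 ∨ c.blocksFun s % 8 = 7 ∨ c.blocksFun s % 8 = 0)).card)) := by
  set p : Fin c.length → Prop := fun s =>
    c.blocksFun s % 8 = 1 ∨ c.blocksFun s % 8 = 7 ∨ c.blocksFun s % 8 = 0 with hp
  set P : Fin c.length → ℝ := fun s =>
    ((g - 1) * Real.cos ((c.blocksFun s : ℝ) * (π / 4))
      + Real.cos ((c.blocksFun s : ℝ) * (π / 2))) / (c.sizeUpTo (s + 1) : ℝ) with hPdef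
  have hden : ∀ s : Fin c.length, (0:ℝ) < (c.sizeUpTo (s + 1) : ℝ) := by
    intro s
    have h1 : c.sizeUpTo s.val < c.sizeUpTo (s.val + 1) := c.sizeUpTo_strict_mono s.2
    exact_mod_cast lt_of_le_of_lt (Nat.zero_le _) h1
  have hPpos : ∀ s, p s → 0 < P s := fun s hs =>
    div_pos ((factor_sign g hg _).1 hs) (hden s)
  have hPneg : ∀ s, ¬ p s → P s < 0 := fun s hs =>
    div_neg_of_neg_of_pos ((factor_sign g hg _).2 hs) (hden s)
  set S := Finset.univ.filter p with hS
  set T := Finset.univ.filter (fun s => ¬ p s) with hT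
  have hsplit : ∏ s : Fin c.length, P s = (∏ s ∈ S, P s) * ∏ s ∈ T, P s :=
    (Finset.prod_filter_mul_prod_filter_not Finset.univ p P).symm
  have h1 : 0 < ∏ s ∈ S, P s :=
    Finset.prod_pos fun s hs => hPpos s (Finset.mem_filter.1 hs).2
  have h3 : 0 < ∏ s ∈ T, (-P s) :=
    Finset.prod_pos fun s hs => neg_pos.2 (hPneg s (Finset.mem_filter.1 hs).2)
  have h2 : ∏ s ∈ T, P s = (-1 : ℝ) ^ T.card * ∏ s ∈ T, (-P s) := by
    rw [← Finset.prod_const, ← Finset.prod_mul_distrib]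
    exact Finset.prod_congr rfl fun s _ => by ring
  have hcard : S.card + T.card = c.length := by
    classical
    rw [hS, hT]
    simpa using Finset.card_filter_add_card_filter_not (s := Finset.univ) (p := p)
  set Q : ℝ := 2 ^ c.length * Real.sqrt 2 ^ n * ((∏ s ∈ S, P s) * ∏ s ∈ T, (-P s)) with hQ
  have hQpos : 0 < Q := by
    have : (0:ℝ) < Real.sqrt 2 := by positivity
    positivity
  have hCR : CR g (π / 4) c = (-1 : ℝ) ^ S.card * Q := by
    have hpow : ((-1:ℝ)) ^ c.length * (-1) ^ T.card = (-1) ^ S.card := by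
      have he : (-1:ℝ) ^ c.length = (-1) ^ (S.card + T.card) := by rw [hcard]
      rw [he, pow_add, mul_assoc, ← pow_add, Even.neg_one_pow ⟨T.card, rfl⟩, mul_one]
    rw [CR, hsplit, h2, hQ]
    ring_nf
    ring_nf at hpow
    nlinarith [hpow, sq_nonneg ((∏ s ∈ S, P s) * ∏ s ∈ T, (-P s))]
  rcases Nat.even_or_odd S.card with hk | hk
  · have hCQ : CR g (π / 4) c = Q := by rw [hCR, hk.neg_one_pow, one_mul]
    rw [hCQ]
    exact ⟨⟨fun _ => hk, fun _ => hQpos⟩,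
      ⟨fun h => absurd hQpos (not_lt.2 h.le),
       fun h => ((Nat.not_odd_iff_even.2 hk) h).elim⟩⟩
  · have hCQ : CR g (π / 4) c = -Q := by rw [hCR, hk.neg_one_pow, neg_one_mul]
    rw [hCQ]
    exact ⟨⟨fun h => absurd hQpos (by linarith),
       fun h => ((Nat.not_even_iff_odd.2 hk) h).elim⟩,
      ⟨fun _ => hk, fun _ => by linarith⟩⟩
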